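/- Let m ∈ ℕ and let q, u, v : Fin m → ℝ. Assume q is nonnegative, the values u(1),…,u(m) are pairwise distinct, and u(j) > u(k) implies q(j) ≥ q(k) for all j, k. Then Σ_{j} q(j)·#{k : k ≠ j and v(j) > v(k)} ≤ Σ_{j} q(j)·#{k : k ≠ j and u(j) > u(k)}. -/
import Mathlib


open scoped Classical

theorem rank_alignment_maximizes (m : ℕ) (q u v : Fin m → ℝ)
    (hq : ∀ j, 0 ≤ q j)
    (hu : Function.Injective u)
    (hmono : ∀ j k, u k < u j → q k ≤ q j) :
    ∑ j : Fin m, q j *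
        ((Finset.univ.filter fun k : Fin m => k ≠ j ∧ v k < v j).card : ℝ) ≤
      ∑ j : Fin m, q j *
        ((Finset.univ.filter fun k : Fin m => k ≠ j ∧ u k < u j).card : ℝ) := by
  classical
  set F : Fin m → Fin m → ℝ := fun j k => if k ≠ j ∧ v k < v j then q j else 0 with hF
  set G : Fin m → Fin m → ℝ := fun j k => if k ≠ j ∧ u k < u j then q j else 0 with hG
  have key : ∀ (w : Fin m → ℝ) (j : Fin m),
      q j * ((Finset.univ.filter fun k : Fin m => k ≠ j ∧ w k < w j).card : ℝ) =
        ∑ k : Fin m, if k ≠ j ∧ w k < w j then q j else 0 := by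
    intro w j
    rw [Finset.card_filter]
    push_cast
    rw [Finset.mul_sum]
    simp [mul_ite]
  have hL : (∑ j : Fin m, q j *
      ((Finset.univ.filter fun k : Fin m => k ≠ j ∧ v k < v j).card : ℝ)) =
      ∑ j : Fin m, ∑ k : Fin m, F j k := by
    refine Finset.sum_congr rfl fun j _ => key v j
  have hR : (∑ j : Fin m, q j *
      ((Finset.univ.filter fun k : Fin m => k ≠ j ∧ u k < u j).card : ℝ)) =
      ∑ j : Fin m, ∑ k : Fin m, G j k := by
    refine Finset.sum_congr rfl fun j _ => key u j
  rw [hL, hR]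
  have hpt : ∀ j k, F j k + F k j ≤ G j k + G k j := by
    intro j k
    by_cases hjk : j = k
    · subst hjk; simp [hF, hG]
    · have hjk' : k ≠ j := fun h => hjk h.symm
      simp only [hF, hG]
      have huu : u j ≠ u k := fun h => hjk (hu h)
      rcases huu.lt_or_gt with h | h
      · -- u j < u k : G j k = 0, G k j = q k
        have hqjk : q j ≤ q k := hmono k j h
        rw [if_neg (fun hc => absurd hc.2 (not_lt.mpr h.le) : ¬(k ≠ j ∧ u k < u j)),
          if_pos (⟨hjk, h⟩ : j ≠ k ∧ u j < u k)]
        by_cases hv : v k < v j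
        · rw [if_pos ⟨hjk', hv⟩, if_neg (fun hc => lt_asymm hv hc.2 : ¬(j ≠ k ∧ v j < v k))]
          linarith
        · rw [if_neg (fun hc => hv hc.2 : ¬(k ≠ j ∧ v k < v j))]
          split_ifs with h2
          · linarith
          · linarith [hq k]
      · -- u k < u j : G j k = q j, G k j = 0
        have hqkj : q k ≤ q j := hmono j k h
        rw [if_pos (⟨hjk', h⟩ : k ≠ j ∧ u k < u j),
          if_neg (fun hc => absurd hc.2 (not_lt.mpr h.le) : ¬(j ≠ k ∧ u j < u k))]
        by_cases hv : v j < v k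
        · rw [if_neg (fun hc => lt_asymm hv hc.2 : ¬(k ≠ j ∧ v k < v j)), if_pos ⟨hjk, hv⟩]
          linarith
        · rw [if_neg (fun hc => hv hc.2 : ¬(j ≠ k ∧ v j < v k))]
          split_ifs with h2
          · linarith
          · linarith [hq j]
  have h2 : (∑ j : Fin m, ∑ k : Fin m, F j k) + (∑ j : Fin m, ∑ k : Fin m, F j k) ≤
      (∑ j : Fin m, ∑ k : Fin m, G j k) + (∑ j : Fin m, ∑ k : Fin m, G j k) := by
    nth_rewrite 2 [Finset.sum_comm]
    nth_rewrite 4 [Finset.sum_comm]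
    rw [← Finset.sum_add_distrib, ← Finset.sum_add_distrib]
    refine Finset.sum_le_sum fun j _ => ?_
    rw [← Finset.sum_add_distrib, ← Finset.sum_add_distrib]
    exact Finset.sum_le_sum fun k _ => hpt j k
  linarith
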